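/- Let L: ℝ^{m×n} → ℝ be differentiable and M-smooth, let ε ∈ [0,1), C₁ ≥ 0, h > 0, and let W, W′ ∈ ℝ^{m×n}, R, E ∈ ℝ^{m×n} satisfy W′ = W − h∇L(W) + hR + E with ⟨R, ∇L(W)⟩ ≤ ε‖∇L(W)‖_F², ‖R‖_F ≤ ‖∇L(W)‖_F, and ‖E‖_F ≤ C₁h²‖∇L(W)‖_F. Then L(W′) ≤ L(W) − h(1−ε)‖∇L(W)‖_F² + (C₁h² + (M/2)(2h + C₁h²)²)‖∇L(W)‖_F². -/

import Mathlib

open Matrix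

/-- Frobenius norm of a real matrix. -/
noncomputable def frobNorm {m n : ℕ} (A : Matrix (Fin m) (Fin n) ℝ) : ℝ :=
  Real.sqrt (∑ i, ∑ j, (A i j) ^ 2)

/-- Frobenius (trace) inner product of two real matrices. -/
def frobInner {m n : ℕ} (A B : Matrix (Fin m) (Fin n) ℝ) : ℝ :=
  ∑ i, ∑ j, A i j * B i j

noncomputable def matE {m n : ℕ} (A : Matrix (Fin m) (Fin n) ℝ) :
    EuclideanSpace ℝ (Fin m × Fin n) := WithLp.toLp 2 (fun p : Fin m × Fin n => A p.1 p.2)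

lemma frobNorm_eq {m n : ℕ} (A : Matrix (Fin m) (Fin n) ℝ) :
    frobNorm A = ‖matE A‖ := by
  rw [frobNorm, EuclideanSpace.norm_eq]
  congr 1
  rw [Fintype.sum_prod_type]
  simp [matE, Real.norm_eq_abs, sq_abs]

lemma frobInner_eq {m n : ℕ} (A B : Matrix (Fin m) (Fin n) ℝ) :
    frobInner A B = inner ℝ (matE A) (matE B) := by
  rw [frobInner, PiLp.inner_apply]
  rw [Fintype.sum_prod_type]
  simp [matE, RCLike.inner_apply, mul_comm]

lemma frobNorm_nonneg {m n : ℕ} (A : Matrix (Fin m) (Fin n) ℝ) : 0 ≤ frobNorm A :=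
  Real.sqrt_nonneg _

lemma frob_cauchy {m n : ℕ} (A B : Matrix (Fin m) (Fin n) ℝ) :
    frobInner A B ≤ frobNorm A * frobNorm B := by
  rw [frobInner_eq, frobNorm_eq, frobNorm_eq]
  exact real_inner_le_norm _ _

lemma frobInner_self {m n : ℕ} (A : Matrix (Fin m) (Fin n) ℝ) :
    frobInner A A = frobNorm A ^ 2 := by
  rw [frobInner_eq, frobNorm_eq]
  exact real_inner_self_eq_norm_sq _

lemma frobInner_comm {m n : ℕ} (A B : Matrix (Fin m) (Fin n) ℝ) :
    frobInner A B = frobInner B A := by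
  simp [frobInner, mul_comm]

lemma frobInner_sub_left {m n : ℕ} (A B C : Matrix (Fin m) (Fin n) ℝ) :
    frobInner (A - B) C = frobInner A C - frobInner B C := by
  rw [frobInner_eq, frobInner_eq, frobInner_eq,
    show matE (A - B) = matE A - matE B from rfl, inner_sub_left]

lemma frobInner_expand {m n : ℕ} (g X Y Z : Matrix (Fin m) (Fin n) ℝ) (a b : ℝ) :
    frobInner g (a • X + b • Y + Z)
      = a * frobInner g X + b * frobInner g Y + frobInner g Z := by
  rw [frobInner_eq, frobInner_eq, frobInner_eq, frobInner_eq,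
    show matE (a • X + b • Y + Z) = a • matE X + b • matE Y + matE Z from rfl,
    inner_add_right, inner_add_right, real_inner_smul_right, real_inner_smul_right]

lemma frobNorm_add_le {m n : ℕ} (A B : Matrix (Fin m) (Fin n) ℝ) :
    frobNorm (A + B) ≤ frobNorm A + frobNorm B := by
  rw [show frobNorm (A + B) = ‖matE A + matE B‖ from frobNorm_eq _, frobNorm_eq A, frobNorm_eq B]
  exact norm_add_le _ _

lemma frobNorm_smul {m n : ℕ} (c : ℝ) (A : Matrix (Fin m) (Fin n) ℝ) :
    frobNorm (c • A) = |c| * frobNorm A := by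
  rw [show frobNorm (c • A) = ‖c • matE A‖ from frobNorm_eq _, norm_smul,
    Real.norm_eq_abs, ← frobNorm_eq]

section descent

variable {m n : ℕ} (L : Matrix (Fin m) (Fin n) ℝ → ℝ)
  (gradL : Matrix (Fin m) (Fin n) ℝ → Matrix (Fin m) (Fin n) ℝ)

lemma deriv_key
    (hgrad : ∀ (W Δ : Matrix (Fin m) (Fin n) ℝ),
      HasDerivAt (fun t : ℝ => L (W + t • Δ)) (frobInner (gradL W) Δ) 0)
    (W Δ : Matrix (Fin m) (Fin n) ℝ) (t : ℝ) :
    HasDerivAt (fun u : ℝ => L (W + u • Δ)) (frobInner (gradL (W + t • Δ)) Δ) t := by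
  have h1 : HasDerivAt (fun s : ℝ => L (W + t • Δ + s • Δ))
      (frobInner (gradL (W + t • Δ)) Δ) ((fun u : ℝ => u - t) t) := by
    simpa using hgrad (W + t • Δ) Δ
  have h2 : HasDerivAt (fun u : ℝ => u - t) 1 t := (hasDerivAt_id t).sub_const t
  have h3 : HasDerivAt ((fun s : ℝ => L (W + t • Δ + s • Δ)) ∘ (fun u : ℝ => u - t))
      (frobInner (gradL (W + t • Δ)) Δ * 1) t := HasDerivAt.comp t h1 h2
  have heq : (fun u : ℝ => L (W + u • Δ))
      = (fun s : ℝ => L (W + t • Δ + s • Δ)) ∘ (fun u : ℝ => u - t) := by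
    funext u
    simp only [Function.comp_apply]
    congr 1
    module
  rw [heq]
  simpa using h3

lemma descent
    (hgrad : ∀ (W Δ : Matrix (Fin m) (Fin n) ℝ),
      HasDerivAt (fun t : ℝ => L (W + t • Δ)) (frobInner (gradL W) Δ) 0)
    (M : ℝ)
    (hsmooth : ∀ W W' : Matrix (Fin m) (Fin n) ℝ,
      frobNorm (gradL W - gradL W') ≤ M * frobNorm (W - W'))
    (W Δ : Matrix (Fin m) (Fin n) ℝ) :
    L (W + Δ) ≤ L W + frobInner (gradL W) Δ + M / 2 * frobNorm Δ ^ 2 := by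
  set c : ℝ := frobInner (gradL W) Δ with hc
  set d : ℝ := frobNorm Δ with hd
  set φ : ℝ → ℝ := fun t => L (W + t • Δ) - t * c - M / 2 * t ^ 2 * d ^ 2 with hφdef
  have hφ : ∀ t : ℝ, HasDerivAt φ
      (frobInner (gradL (W + t • Δ)) Δ - c - M * t * d ^ 2) t := by
    intro t
    have h1 := deriv_key L gradL hgrad W Δ t
    have h2 : HasDerivAt (fun u : ℝ => u * c) (1 * c) t := (hasDerivAt_id t).mul_const c
    have h3 : HasDerivAt (fun u : ℝ => M / 2 * u ^ 2 * d ^ 2)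
        (M / 2 * (2 * t) * d ^ 2) t := by
      have : HasDerivAt (fun u : ℝ => u ^ 2) (2 * t) t := by
        simpa using hasDerivAt_pow 2 t
      exact (this.const_mul (M / 2)).mul_const (d ^ 2)
    have h4 := (h1.sub h2).sub h3
    exact h4.congr_deriv (by ring)
  have mono : AntitoneOn φ (Set.Icc (0:ℝ) 1) := by
    apply antitoneOn_of_deriv_nonpos (convex_Icc 0 1)
    · exact fun t _ => (hφ t).continuousAt.continuousWithinAt
    · exact fun t _ => (hφ t).differentiableAt.differentiableWithinAt
    · intro t ht
      rw [interior_Icc] at ht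
      rw [(hφ t).deriv]
      have hcs : frobInner (gradL (W + t • Δ) - gradL W) Δ
          ≤ frobNorm (gradL (W + t • Δ) - gradL W) * frobNorm Δ := frob_cauchy _ _
      have hs := hsmooth (W + t • Δ) W
      have hWt : W + t • Δ - W = t • Δ := by module
      rw [hWt, frobNorm_smul, abs_of_pos ht.1] at hs
      rw [frobInner_sub_left] at hcs
      have hdn : 0 ≤ d := frobNorm_nonneg _
      nlinarith [mul_le_mul_of_nonneg_right hs hdn, ht.1.le]
  have h01 := mono (Set.left_mem_Icc.2 zero_le_one) (Set.right_mem_Icc.2 zero_le_one)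
    zero_le_one
  simp only [hφdef, one_smul, zero_smul, add_zero, one_pow, mul_one, one_mul,
    zero_pow, mul_zero, zero_mul, sub_zero, ne_eq, OfNat.ofNat_ne_zero,
    not_false_eq_true] at h01
  linarith

end descent

theorem perturbed_descent_step {m n : ℕ}
    (L : Matrix (Fin m) (Fin n) ℝ → ℝ)
    (gradL : Matrix (Fin m) (Fin n) ℝ → Matrix (Fin m) (Fin n) ℝ)
    -- `gradL` is the gradient of the differentiable function `L`
    (hgrad : ∀ (W Δ : Matrix (Fin m) (Fin n) ℝ),
      HasDerivAt (fun t : ℝ => L (W + t • Δ)) (frobInner (gradL W) Δ) 0)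
    (M : ℝ)
    -- M-smoothness of `L`
    (hsmooth : ∀ W W' : Matrix (Fin m) (Fin n) ℝ,
      frobNorm (gradL W - gradL W') ≤ M * frobNorm (W - W'))
    (ε : ℝ) (hε0 : 0 ≤ ε) (hε1 : ε < 1)
    (C₁ : ℝ) (hC₁ : 0 ≤ C₁) (h : ℝ) (hh : 0 < h)
    (W W' R E : Matrix (Fin m) (Fin n) ℝ)
    (hupd : W' = W - h • gradL W + h • R + E)
    (hR : frobInner R (gradL W) ≤ ε * frobNorm (gradL W) ^ 2)
    (hRnorm : frobNorm R ≤ frobNorm (gradL W))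
    (hE : frobNorm E ≤ C₁ * h ^ 2 * frobNorm (gradL W)) :
    L W' ≤ L W - h * (1 - ε) * frobNorm (gradL W) ^ 2
      + (C₁ * h ^ 2 + M / 2 * (2 * h + C₁ * h ^ 2) ^ 2) * frobNorm (gradL W) ^ 2 := by
  -- degenerate cases: m = 0 or n = 0
  rcases Nat.eq_zero_or_pos m with hm | hm
  · subst hm
    have hWW : W' = W := by funext i j; exact i.elim0
    have hG : frobNorm (gradL W) = 0 := by simp [frobNorm]
    rw [hWW, hG]
    ring_nf
    simp
  rcases Nat.eq_zero_or_pos n with hn | hn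
  · subst hn
    have hWW : W' = W := by funext i j; exact j.elim0
    have hG : frobNorm (gradL W) = 0 := by simp [frobNorm]
    rw [hWW, hG]
    ring_nf
    simp
  -- M is nonnegative
  have hM : 0 ≤ M := by
    set X : Matrix (Fin m) (Fin n) ℝ := fun _ _ => 1 with hX
    have hs := hsmooth W (W + X)
    have hWX : W - (W + X) = -X := by module
    rw [hWX] at hs
    have hnX : frobNorm (-X) = Real.sqrt (m * n) := by
      simp only [frobNorm, Matrix.neg_apply]
      simp [hX, Finset.sum_const, mul_comm]
    have hpos : (0:ℝ) < Real.sqrt (m * n) := by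
      apply Real.sqrt_pos.2
      positivity
    rw [hnX] at hs
    nlinarith [frobNorm_nonneg (gradL W - gradL (W + X))]
  set g : Matrix (Fin m) (Fin n) ℝ := gradL W with hg
  set G : ℝ := frobNorm g with hGdef
  have hGnn : 0 ≤ G := frobNorm_nonneg _
  set Δ : Matrix (Fin m) (Fin n) ℝ := (-h) • g + h • R + E with hΔdef
  have hWΔ : W' = W + Δ := by rw [hupd, hΔdef]; module
  have hdes := descent L gradL hgrad M hsmooth W Δ
  rw [← hWΔ] at hdes
  -- inner product bound
  have hinner : frobInner g Δ ≤ -h * G ^ 2 + h * ε * G ^ 2 + C₁ * h ^ 2 * G ^ 2 := by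
    rw [hΔdef, frobInner_expand, frobInner_self, ← hGdef]
    have h1 : frobInner g R ≤ ε * G ^ 2 := by rw [frobInner_comm]; exact hR
    have h2 : frobInner g E ≤ G * (C₁ * h ^ 2 * G) := by
      calc frobInner g E ≤ frobNorm g * frobNorm E := frob_cauchy _ _
        _ ≤ G * (C₁ * h ^ 2 * G) := by
            apply mul_le_mul_of_nonneg_left hE hGnn
    nlinarith
  -- norm bound
  have hnormΔ : frobNorm Δ ≤ (2 * h + C₁ * h ^ 2) * G := by
    rw [hΔdef]
    calc frobNorm ((-h) • g + h • R + E)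
        ≤ frobNorm ((-h) • g + h • R) + frobNorm E := frobNorm_add_le _ _
      _ ≤ frobNorm ((-h) • g) + frobNorm (h • R) + frobNorm E := by
          linarith [frobNorm_add_le ((-h) • g) (h • R)]
      _ = h * G + h * frobNorm R + frobNorm E := by
          rw [frobNorm_smul, frobNorm_smul, abs_neg, abs_of_pos hh]
      _ ≤ h * G + h * G + C₁ * h ^ 2 * G := by
          have := mul_le_mul_of_nonneg_left hRnorm hh.le
          linarith
      _ = (2 * h + C₁ * h ^ 2) * G := by ring
  have hΔnn : 0 ≤ frobNorm Δ := frobNorm_nonneg _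
  have hsq : frobNorm Δ ^ 2 ≤ ((2 * h + C₁ * h ^ 2) * G) ^ 2 := by
    exact pow_le_pow_left₀ hΔnn hnormΔ 2
  have hM2 : M / 2 * frobNorm Δ ^ 2 ≤ M / 2 * ((2 * h + C₁ * h ^ 2) * G) ^ 2 :=
    mul_le_mul_of_nonneg_left hsq (by linarith)
  nlinarith [hdes, hinner, hM2]
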